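/- Suppose D_iᵀAD_i is invertible and rank D_i = p for all 0 ≤ i ≤ k in the cCG iteration. Then for every vector e_j of the canonical basis of ℝᵖ, the vector X_{k+1}e_j ∈ ℝⁿ (the j-th column of X_{k+1}) is the minimizer of f over the affine subspace X₀e_j + span[D_i]₀^k: for every v ∈ span[D_i]₀^k, f(X_{k+1}e_j) ≤ f(X₀e_j + v). -/

import Mathlib

open Matrix

/-- The span in `ℝⁿ` of all the columns of the matrices `M 0, …, M k`. -/
def colSpan (n p : ℕ) (k : ℕ) (M : ℕ → Matrix (Fin n) (Fin p) ℝ) :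
    Submodule ℝ (Fin n → ℝ) :=
  Submodule.span ℝ {v : Fin n → ℝ | ∃ i ≤ k, ∃ j : Fin p, v = fun r => M i r j}

/-- Right cancellation by a matrix with unit determinant. -/
lemma mul_cancel_right_of_det {q p : ℕ} (N : Matrix (Fin q) (Fin p) ℝ)
    (B : Matrix (Fin p) (Fin p) ℝ) (hB : IsUnit B.det) (h : N * B = 0) : N = 0 := by
  have h2 := congrArg (· * B⁻¹) h
  simpa [Matrix.mul_assoc, Matrix.mul_nonsing_inv _ hB] using h2

theorem cCG_columns_minimize
    (n p : ℕ) (hn : 0 < n) (hp : 0 < p) (hpn : p ≤ n)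
    (A : Matrix (Fin n) (Fin n) ℝ) (hA : A.PosDef)
    (b : Fin n → ℝ) (k : ℕ)
    (X R D : ℕ → Matrix (Fin n) (Fin p) ℝ)
    (α β : ℕ → Matrix (Fin p) (Fin p) ℝ)
    (hR : ∀ i, R i = A * X i - Matrix.vecMulVec b 1)
    (hD0 : D 0 = R 0)
    (hinv : ∀ i ≤ k, IsUnit ((D i)ᵀ * A * D i).det)
    (hrank : ∀ i ≤ k, (D i).rank = p)
    (hα : ∀ i ≤ k, α i = -((R i)ᵀ * D i * ((D i)ᵀ * A * D i)⁻¹))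
    (hX : ∀ i ≤ k, X (i + 1) = X i + D i * (α i)ᵀ)
    (hβ : ∀ i ≤ k, β i = -((R (i + 1))ᵀ * A * D i * ((D i)ᵀ * A * D i)⁻¹))
    (hDs : ∀ i ≤ k, D (i + 1) = R (i + 1) + D i * (β i)ᵀ)
    (f : (Fin n → ℝ) → ℝ)
    (hf : ∀ y, f y = (1 / 2) * (y ⬝ᵥ A *ᵥ y) - b ⬝ᵥ y)
    :
    ∀ j : Fin p, ∀ v ∈ colSpan n p k D,
      f (fun r => X (k + 1) r j) ≤ f ((fun r => X 0 r j) + v) := by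
  have hAt : Aᵀ = A := by exact (show A.IsSymm by simpa using hA.1)
  -- residual recurrence
  have hRR : ∀ i ≤ k, R (i + 1) = R i + A * (D i * (α i)ᵀ) := by
    intro i hi
    rw [hR, hR, hX i hi, Matrix.mul_add]
    abel
  -- α i * (Dᵀ A D) = -(Rᵀ D)
  have hαM : ∀ i ≤ k, α i * ((D i)ᵀ * A * D i) = -((R i)ᵀ * D i) := by
    intro i hi
    rw [hα i hi, Matrix.neg_mul, Matrix.mul_assoc,
      Matrix.nonsing_inv_mul _ (hinv i hi), Matrix.mul_one]
  have hβM : ∀ i ≤ k, β i * ((D i)ᵀ * A * D i) = -((R (i + 1))ᵀ * A * D i) := by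
    intro i hi
    rw [hβ i hi, Matrix.neg_mul, Matrix.mul_assoc,
      Matrix.nonsing_inv_mul _ (hinv i hi), Matrix.mul_one]
  -- local orthogonality
  have hO1 : ∀ i ≤ k, (R (i + 1))ᵀ * D i = 0 := by
    intro i hi
    have : (R (i + 1))ᵀ * D i
        = (R i)ᵀ * D i + α i * ((D i)ᵀ * A * D i) := by
      rw [hRR i hi, Matrix.transpose_add, Matrix.add_mul, Matrix.transpose_mul,
        Matrix.transpose_mul, Matrix.transpose_transpose, hAt]
      simp [Matrix.mul_assoc]
    rw [this, hαM i hi]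
    simp
  -- local conjugacy
  have hC1 : ∀ i ≤ k, (D (i + 1))ᵀ * A * D i = 0 := by
    intro i hi
    have : (D (i + 1))ᵀ * A * D i
        = (R (i + 1))ᵀ * A * D i + β i * ((D i)ᵀ * A * D i) := by
      rw [hDs i hi, Matrix.transpose_add, Matrix.add_mul, Matrix.add_mul,
        Matrix.transpose_mul, Matrix.transpose_transpose]
      simp [Matrix.mul_assoc]
    rw [this, hβM i hi]
    simp
  -- RᵀD = RᵀR
  have hRDRR : ∀ i ≤ k, (R i)ᵀ * D i = (R i)ᵀ * R i := by
    intro i hi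
    match i with
    | 0 => rw [hD0]
    | (j + 1) =>
      rw [hDs j (le_of_lt hi), Matrix.mul_add, ← Matrix.mul_assoc,
        hO1 j (le_of_lt hi)]
      simp
  -- injectivity of (DᵀAD) mulVec
  have hDADinj : ∀ i ≤ k, Function.Injective ((D i)ᵀ * A * D i).mulVec := by
    intro i hi
    exact mulVec_injective_iff_isUnit.mpr (isUnit_iff_isUnit_det _ |>.mpr (hinv i hi))
  -- RᵀD has unit determinant
  have hRDdet : ∀ i ≤ k, IsUnit ((R i)ᵀ * D i).det := by
    intro i hi
    rw [← isUnit_iff_isUnit_det]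
    apply mulVec_injective_iff_isUnit.mp
    have hker : ∀ z, ((R i)ᵀ * D i) *ᵥ z = 0 → z = 0 := by
      intro z hz
      -- first, R i *ᵥ z = 0
      have hz' : ((R i)ᵀ * R i) *ᵥ z = 0 := by rw [← hRDRR i hi]; exact hz
      have hRz : R i *ᵥ z = 0 := by
        have h2 : z ⬝ᵥ (((R i)ᵀ * R i) *ᵥ z) = 0 := by rw [hz']; simp
        rw [← Matrix.mulVec_mulVec, dotProduct_mulVec, vecMul_transpose,
          dotProduct_self_eq_zero] at h2
        exact h2
      -- then (DᵀAD) z = 0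
      have hDz : ((D i)ᵀ * A * D i) *ᵥ z = 0 := by
        match i with
        | 0 =>
          have : D 0 *ᵥ z = 0 := by rw [hD0]; exact hRz
          rw [← Matrix.mulVec_mulVec, this]
          simp
        | (j + 1) =>
          have hDz' : D (j + 1) *ᵥ z = D j *ᵥ ((β j)ᵀ *ᵥ z) := by
            rw [hDs j (le_of_lt hi), Matrix.add_mulVec, hRz, Matrix.mulVec_mulVec]
            simp
          calc ((D (j+1))ᵀ * A * D (j+1)) *ᵥ z
              = ((D (j+1))ᵀ * A) *ᵥ (D (j+1) *ᵥ z) := by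
                rw [Matrix.mulVec_mulVec]
            _ = ((D (j+1))ᵀ * A * D j) *ᵥ ((β j)ᵀ *ᵥ z) := by
                rw [hDz', Matrix.mulVec_mulVec]
            _ = 0 := by rw [hC1 j (le_of_lt hi)]; simp
      have := hDADinj i hi (a₁ := z) (a₂ := 0) (by simpa using hDz)
      simpa using this
    intro z w hzw
    have : ((R i)ᵀ * D i) *ᵥ (z - w) = 0 := by
      rw [Matrix.mulVec_sub, hzw]; simp
    exact sub_eq_zero.mp (hker _ this)

  -- α has unit determinant
  have hαdet : ∀ i ≤ k, IsUnit (α i).det := by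
    intro i hi
    rw [hα i hi]
    have h1 : IsUnit ((R i)ᵀ * D i * ((D i)ᵀ * A * D i)⁻¹).det := by
      rw [Matrix.det_mul]
      exact (hRDdet i hi).mul (Matrix.isUnit_nonsing_inv_det _ (hinv i hi))
    rw [Matrix.det_neg]
    exact (((by simp : IsUnit (-1 : ℝ)).pow (Fintype.card (Fin p)))).mul h1
  -- main induction: orthogonality and conjugacy
  have key : ∀ m, m ≤ k + 1 → ∀ i < m,
      (R m)ᵀ * D i = 0 ∧ (m ≤ k → (D m)ᵀ * A * D i = 0) := by
    intro m
    induction m using Nat.strong_induction_on with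
    | _ m ih =>
      match m with
      | 0 => exact fun _ i hi => absurd hi (Nat.not_lt_zero i)
      | (m' + 1) =>
        intro hm i hi
        have hm' : m' ≤ k := Nat.lt_succ_iff.mp hm
        -- orthogonality at level m' + 1
        have ortho : ∀ i < m' + 1, (R (m' + 1))ᵀ * D i = 0 := by
          intro i hi
          rcases Nat.lt_succ_iff_lt_or_eq.mp hi with hlt | heq
          · have e1 : (R (m' + 1))ᵀ * D i
                = (R m')ᵀ * D i + α m' * ((D m')ᵀ * A * D i) := by
              rw [hRR m' hm', Matrix.transpose_add, Matrix.add_mul,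
                Matrix.transpose_mul, Matrix.transpose_mul,
                Matrix.transpose_transpose, hAt]
              simp [Matrix.mul_assoc]
            have h1 := (ih m' (Nat.lt_succ_self m') (Nat.le_succ_of_le hm') i hlt).1
            have h2 := (ih m' (Nat.lt_succ_self m') (Nat.le_succ_of_le hm') i hlt).2 hm'
            rw [e1, h1, h2]
            simp
          · subst heq; exact hO1 i hm'
        refine ⟨ortho i hi, fun hmk => ?_⟩
        rcases Nat.lt_succ_iff_lt_or_eq.mp hi with hlt | heq
        · -- i < m'
          have hik : i ≤ k := le_trans (le_of_lt hlt) hm'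
          -- R (m'+1) is orthogonal to all residuals R j, j ≤ m'
          have RmR : ∀ j ≤ m', (R (m' + 1))ᵀ * R j = 0 := by
            intro j hj
            match j with
            | 0 => rw [← hD0]; exact ortho 0 (Nat.succ_pos m')
            | (j' + 1) =>
              have hj' : j' ≤ k := le_trans (Nat.le_of_succ_le hj) hm'
              have hRj : R (j' + 1) = D (j' + 1) - D j' * (β j')ᵀ := by
                rw [hDs j' hj']; abel
              rw [hRj, Matrix.mul_sub, ← Matrix.mul_assoc,
                ortho (j' + 1) (Nat.lt_succ_of_le hj),
                ortho j' (Nat.lt_succ_of_le (Nat.le_of_succ_le hj))]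
              simp
          have e3 : ((R (m' + 1))ᵀ * A * D i) * (α i)ᵀ = 0 := by
            have hAD : A * (D i * (α i)ᵀ) = R (i + 1) - R i := by
              rw [hRR i hik]; abel
            calc ((R (m' + 1))ᵀ * A * D i) * (α i)ᵀ
                = (R (m' + 1))ᵀ * (A * (D i * (α i)ᵀ)) := by
                  simp [Matrix.mul_assoc]
              _ = (R (m' + 1))ᵀ * R (i + 1) - (R (m' + 1))ᵀ * R i := by
                  rw [hAD, Matrix.mul_sub]
              _ = 0 := by
                  rw [RmR (i + 1) hlt, RmR i (le_of_lt hlt)]; simp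
          have hdet : IsUnit ((α i)ᵀ).det := by
            rw [Matrix.det_transpose]; exact hαdet i hik
          have hRAD : (R (m' + 1))ᵀ * A * D i = 0 :=
            mul_cancel_right_of_det _ _ hdet e3
          have e2 : (D (m' + 1))ᵀ * A * D i
              = (R (m' + 1))ᵀ * A * D i + β m' * ((D m')ᵀ * A * D i) := by
            rw [hDs m' hm', Matrix.transpose_add, Matrix.add_mul, Matrix.add_mul,
              Matrix.transpose_mul, Matrix.transpose_transpose]
            simp [Matrix.mul_assoc]
          have h2 := (ih m' (Nat.lt_succ_self m') (Nat.le_succ_of_le hm') i hlt).2 hm'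
          rw [e2, hRAD, h2]
          simp
        · subst heq; exact hC1 i hm'
  have hortho : ∀ i ≤ k, (R (k + 1))ᵀ * D i = 0 :=
    fun i hi => (key (k + 1) le_rfl i (Nat.lt_succ_of_le hi)).1
  intro j v hv
  -- columns of X m lie in the affine subspace
  have hmulVec_mem : ∀ m ≤ k, ∀ w : Fin p → ℝ, D m *ᵥ w ∈ colSpan n p k D := by
    intro m hm w
    have e : D m *ᵥ w = ∑ t : Fin p, w t • (fun r => D m r t) := by
      funext r
      simp [Matrix.mulVec, dotProduct, Finset.sum_apply, mul_comm]
    rw [e]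
    exact Submodule.sum_mem _ fun t _ =>
      Submodule.smul_mem _ _ (Submodule.subset_span ⟨m, hm, t, rfl⟩)
  have hcolspan : ∀ m ≤ k + 1,
      ((fun r => X m r j) - fun r => X 0 r j) ∈ colSpan n p k D := by
    intro m
    induction m with
    | zero => intro _; simp
    | succ m ihm =>
      intro hm
      have hm' : m ≤ k := Nat.lt_succ_iff.mp hm
      have e : ((fun r => X (m + 1) r j) - fun r => X 0 r j)
          = (((fun r => X m r j) - fun r => X 0 r j)
            + D m *ᵥ (fun t => (α m)ᵀ t j)) := by
        funext r
        rw [hX m hm']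
        simp [Matrix.mulVec, dotProduct, Matrix.mul_apply]
        ring
      rw [e]
      exact Submodule.add_mem _ (ihm (Nat.le_succ_of_le hm')) (hmulVec_mem m hm' _)
  set x : Fin n → ℝ := fun r => X (k + 1) r j with hxdef
  set x0 : Fin n → ℝ := fun r => X 0 r j with hx0def
  have hxmem : x - x0 ∈ colSpan n p k D := hcolspan (k + 1) le_rfl
  -- the residual column is orthogonal to the span
  have hrx : A *ᵥ x - b = fun r => R (k + 1) r j := by
    funext r
    rw [hR (k + 1)]
    simp [Matrix.mulVec, dotProduct, Matrix.mul_apply, Matrix.vecMulVec_apply, hxdef]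
  have hres : ∀ u ∈ colSpan n p k D, (A *ᵥ x - b) ⬝ᵥ u = 0 := by
    intro u hu
    rw [hrx]
    induction hu using Submodule.span_induction with
    | mem u hu =>
      obtain ⟨i, hi, j', rfl⟩ := hu
      have h0 := congrFun (congrFun (hortho i hi) j) j'
      rw [Matrix.mul_apply] at h0
      simpa [dotProduct, Matrix.transpose_apply] using h0
    | zero => simp
    | add u w hu hw ihu ihw => rw [dotProduct_add, ihu, ihw]; simp
    | smul a u hu ihu => rw [dotProduct_smul, ihu]; simp
  -- conclude by the quadratic expansion
  set w : Fin n → ℝ := v - (x - x0) with hwdef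
  have hwmem : w ∈ colSpan n p k D := Submodule.sub_mem _ hv hxmem
  have hxv : x0 + v = x + w := by funext r; simp [hwdef]; ring
  have hsym : x ⬝ᵥ A *ᵥ w = w ⬝ᵥ A *ᵥ x := by
    rw [dotProduct_mulVec, ← mulVec_transpose, hAt, dotProduct_comm]
  have hexp : f (x + w) = f x + (1 / 2) * (w ⬝ᵥ A *ᵥ w) + (A *ᵥ x - b) ⬝ᵥ w := by
    have hsym2 : (A *ᵥ x) ⬝ᵥ w = w ⬝ᵥ A *ᵥ x := dotProduct_comm _ _
    rw [hf, hf]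
    simp only [Matrix.mulVec_add, dotProduct_add, add_dotProduct, sub_dotProduct]
    ring_nf
    linarith
  have hnn : 0 ≤ w ⬝ᵥ A *ᵥ w := by simpa using hA.posSemidef.dotProduct_mulVec_nonneg w
  have h0 := hres w hwmem
  rw [hxv, hexp, h0]
  linarith
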